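/- There exist a computable (decidable) validity predicate V : ℕ → ℕ → Bool, an upper-semicomputable loss L : ℕ → ℕ → ℕ — meaning there is a total computable q : ℕ → ℕ → ℕ → ℕ, nonincreasing in the last argument, with L(x,r) = the eventual limit of s ↦ q(x,r,s) — and a computable linear order ≺ on ℕ, such that for every x the set {r : V(x,r) = true} is nonempty, the minimum of L(x,·) over this set is attained, and yet there is NO total computable function f : ℕ → ℕ satisfying, for all x: V(x, f(x)) = true, L(x, f(x)) ≤ L(x, r) for all r with V(x,r) = true, and f(x) ≺-precedes every other minimizer. In particular the ≺-least loss-minimizing response r*(x) is not computable as a function of x. (Theorem 4: decidable validity with upper-semicomputable loss does not admit a computable optimal-response selector; the construction encodes the halting problem into a one-bit tie between two candidate responses.) -/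

import Mathlib

open Nat.Partrec Nat.Partrec.Code

open Classical in
noncomputable def Lfun : ℕ → ℕ → ℕ := fun x r =>
  if r = 0 then (if (eval (Denumerable.ofNat Code x) 0).Dom then 0 else 1) else 0

def qfun : ℕ → ℕ → ℕ → ℕ := fun x r s =>
  if r = 0 then (if (evaln s (Denumerable.ofNat Code x) 0).isSome = true then 0 else 1) else 0

theorem qfun_primrec : Primrec (fun p : ℕ × ℕ × ℕ => qfun p.1 p.2.1 p.2.2) := by
  have h1 : Primrec (fun p : ℕ × ℕ × ℕ =>
      (evaln p.2.2 (Denumerable.ofNat Code p.1) 0).isSome) :=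
    Primrec.option_isSome.comp <| Nat.Partrec.Code.primrec_evaln.comp
      (((Primrec.snd.comp Primrec.snd).pair
        ((Primrec.ofNat Code).comp Primrec.fst)).pair (Primrec.const 0))
  exact Primrec.ite (Primrec.eq.comp (Primrec.fst.comp Primrec.snd) (Primrec.const 0))
    (Primrec.ite (Primrec.eq.comp h1 (Primrec.const true)) (Primrec.const 0) (Primrec.const 1))
    (Primrec.const 0)

theorem qfun_lim (x r : ℕ) : ∃ s₀, ∀ s, s₀ ≤ s → qfun x r s = Lfun x r := by
  unfold qfun Lfun
  by_cases hr : r = 0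
  · simp only [hr, if_pos rfl]
    by_cases hd : (eval (Denumerable.ofNat Code x) 0).Dom
    · obtain ⟨y, hy⟩ := Part.dom_iff_mem.mp hd
      obtain ⟨k, hk⟩ := evaln_complete.mp hy
      exact ⟨k, fun s hs => by
        rw [if_pos hd, if_pos (Option.isSome_iff_exists.mpr ⟨y, evaln_mono hs hk⟩)]⟩
    · refine ⟨0, fun s _ => ?_⟩
      have h : ¬ (evaln s (Denumerable.ofNat Code x) 0).isSome = true := by
        intro h
        obtain ⟨y, hy⟩ := Option.isSome_iff_exists.mp h
        exact hd (Part.dom_iff_mem.mpr ⟨y, evaln_complete.mpr ⟨s, hy⟩⟩)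
      simp [h, hd]
  · simp [hr]

/-- Theorem 4: decidable validity with an upper-semicomputable loss does not
admit a computable optimal-response selector. There exist a computable validity
predicate `V`, a loss `L` that is the pointwise nonincreasing limit of a total
computable approximation `q`, and a computable strict total (linear) order `≺`
on `ℕ`, such that every instance has a valid response and the minimum of
`L(x,·)` over valid responses is attained, yet no total computable `f` picks,
for every `x`, a valid minimizer `f x` that `≺`-precedes every other minimizer. -/
theorem no_computable_selector_usc_loss :
    ∃ (V : ℕ → ℕ → Bool) (L : ℕ → ℕ → ℕ) (q : ℕ → ℕ → ℕ → ℕ) (prec : ℕ → ℕ → Bool),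
      Computable₂ V ∧
      Computable (fun p : ℕ × ℕ × ℕ => q p.1 p.2.1 p.2.2) ∧
      (∀ x r, Antitone (q x r)) ∧
      (∀ x r, ∃ s₀, ∀ s, s₀ ≤ s → q x r s = L x r) ∧
      Computable₂ prec ∧
      IsStrictTotalOrder ℕ (fun a b => prec a b = true) ∧
      (∀ x, ∃ r, V x r = true) ∧
      (∀ x, ∃ r, V x r = true ∧ ∀ r', V x r' = true → L x r ≤ L x r') ∧
      ¬ ∃ f : ℕ → ℕ, Computable f ∧ ∀ x,
          V x (f x) = true ∧
          (∀ r, V x r = true → L x (f x) ≤ L x r) ∧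
          (∀ r, V x r = true → (∀ r', V x r' = true → L x r ≤ L x r') →
            r ≠ f x → prec (f x) r = true) := by
  have hblt : (fun a b => Nat.blt a b) = fun a b : ℕ => decide (a < b) := by
    funext a b; rw [Bool.eq_iff_iff]; simp
  refine ⟨fun _ r => decide (r ≤ 1), Lfun, qfun, Nat.blt, ?_, ?_, ?_, fun x r => qfun_lim x r,
    ?_, ?_, ?_, ?_, ?_⟩
  · exact Primrec.to_comp (Primrec.nat_le.comp (Primrec.snd (β := ℕ)) (Primrec.const 1)).decide
  · exact qfun_primrec.to_comp
  · intro x r s t hst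
    unfold qfun
    split
    · by_cases h : (evaln s (Denumerable.ofNat Code x) 0).isSome = true
      · obtain ⟨y, hy⟩ := Option.isSome_iff_exists.mp h
        rw [if_pos (Option.isSome_iff_exists.mpr ⟨y, evaln_mono hst hy⟩)]
        exact Nat.zero_le _
      · rw [if_neg h]
        split <;> omega
    · exact le_refl _
  · rw [show Nat.blt = fun a b : ℕ => decide (a < b) from hblt]
    exact Primrec.to_comp (Primrec.nat_lt.comp (Primrec.fst (β := ℕ)) Primrec.snd).decide
  · have : (fun a b => Nat.blt a b = true) = ((· < ·) : ℕ → ℕ → Prop) := by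
      funext a b; simp
    rw [this]
    infer_instance
  · exact fun x => ⟨1, by simp⟩
  · intro x
    refine ⟨1, by simp, fun r' _ => ?_⟩
    simp only [Lfun, if_neg one_ne_zero]
    exact Nat.zero_le _
  · rintro ⟨f, hf, hspec⟩
    apply ComputablePred.halting_problem 0
    rw [ComputablePred.computable_iff]
    refine ⟨fun c => decide (f (Encodable.encode c) = 0), ?_, ?_⟩
    · exact Computable.comp (Primrec.to_comp
        (Primrec.eq.comp Primrec.id (Primrec.const 0)).decide)
        (hf.comp Computable.encode)
    · funext c
      set x := Encodable.encode c with hx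
      have hcode : Denumerable.ofNat Code x = c := Denumerable.ofNat_encode c
      obtain ⟨hV, hmin, hlt⟩ := hspec x
      have hfle : f x ≤ 1 := by simpa using hV
      simp only [decide_eq_true_eq, eq_iff_iff]
      constructor
      · intro hd
        by_contra hne
        have h0 : f x = 1 := by
          rcases Nat.le_one_iff_eq_zero_or_eq_one.mp hfle with h | h
          · exact absurd h hne
          · exact h
        have := hlt 0 (by simp) (fun r' _ => by simp [Lfun, hcode, hd])
          (fun h => hne h.symm)
        rw [h0] at this
        simp [Nat.blt] at this
      · intro h0
        by_contra hd
        have hL0 : Lfun x 0 = 1 := by simp [Lfun, hcode, hd]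
        have := hmin 1 (by simp)
        have hL1 : Lfun x 1 = 0 := by simp [Lfun]
        rw [h0, hL0, hL1] at this
        omega
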